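/- Let N ≥ 1, let B be an N×N integer matrix, let u ∈ {1,…,N}, let B₋ be the single Cuntz splice of B at u, and let B₋₋ be the double Cuntz splice of B at u. Then there exist U ∈ SL(N+4,ℤ) and V ∈ GL(N+4,ℤ) with det V = −1, each of which agrees with the identity matrix in every entry (i,j) for which not both i and j belong to the set {N+1, N+2, N+3, N+4}, such that U · (B₋ ⊕ (−I₂)) · V = B₋₋. -/

import Mathlib

open Matrix

/-- The single Cuntz splice `B₋` of `B` at `u`, augmented by `-I₂`, i.e. the matrix
`B₋ ⊕ (-I₂)` where the indices `N+1, N+2` (the splice) are modelled as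
`Sum.inr 0, Sum.inr 1` and the indices `N+3, N+4` (carrying `-I₂`) as
`Sum.inr 2, Sum.inr 3`. -/
def cuntzSpliceOnceExt {N : ℕ} (B : Matrix (Fin N) (Fin N) ℤ) (u : Fin N) :
    Matrix (Fin N ⊕ Fin 4) (Fin N ⊕ Fin 4) ℤ :=
  fun i j => match i, j with
  | Sum.inl i, Sum.inl j => B i j
  | Sum.inl i, Sum.inr k => if i = u ∧ k = 0 then 1 else 0
  | Sum.inr k, Sum.inl j => if k = 0 ∧ j = u then 1 else 0
  | Sum.inr k, Sum.inr l => !![0, 1, 0, 0; 1, 0, 0, 0; 0, 0, -1, 0; 0, 0, 0, -1] k l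

/-- The double Cuntz splice `B₋₋` of `B` at `u`, with the four new indices
`N+1, …, N+4` modelled as `Sum.inr 0, …, Sum.inr 3`. -/
def cuntzSpliceTwice {N : ℕ} (B : Matrix (Fin N) (Fin N) ℤ) (u : Fin N) :
    Matrix (Fin N ⊕ Fin 4) (Fin N ⊕ Fin 4) ℤ :=
  fun i j => match i, j with
  | Sum.inl i, Sum.inl j => B i j
  | Sum.inl i, Sum.inr k => if i = u ∧ k = 0 then 1 else 0
  | Sum.inr k, Sum.inl j => if k = 0 ∧ j = u then 1 else 0
  | Sum.inr k, Sum.inr l => !![0, 1, 1, 0; 1, 0, 0, 0; 1, 0, 0, 1; 0, 0, 1, 0] k l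


/-- Left 4×4 block used in the equivalence. -/
def cuntzP : Matrix (Fin 4) (Fin 4) ℤ := !![1,0,0,0; 0,1,0,0; 0,-1,-1,-1; 0,-1,0,-1]
/-- Right 4×4 block used in the equivalence. -/
def cuntzQ : Matrix (Fin 4) (Fin 4) ℤ := !![1,0,0,0; 0,1,1,0; 1,0,-1,1; 1,0,1,0]

lemma cuntzP_det : cuntzP.det = 1 := by decide
lemma cuntzQ_det : cuntzQ.det = -1 := by decide
lemma cuntzPAQ : cuntzP * !![0,1,0,0; 1,0,0,0; 0,0,-1,0; 0,0,0,-1] * cuntzQ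
    = !![0, 1, 1, 0; 1, 0, 0, 0; 1, 0, 0, 1; 0, 0, 1, 0] := by decide
lemma cuntzP_col (k : Fin 4) : cuntzP k 0 = if k = 0 then 1 else 0 := by revert k; decide
lemma cuntzQ_row (k : Fin 4) : cuntzQ 0 k = if k = 0 then 1 else 0 := by revert k; decide

/-- There is a `GL`-equivalence `(U, V)` from `B₋ ⊕ (-I₂)` to the double Cuntz splice
`B₋₋`, with `det U = 1`, `det V = -1`, both supported on the rows and columns indexed
by `N+1, …, N+4`. -/
theorem cuntzSplice_once_to_twice_glEquivalence
    (N : ℕ) (hN : 1 ≤ N) (B : Matrix (Fin N) (Fin N) ℤ) (u : Fin N) :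
    ∃ U V : Matrix (Fin N ⊕ Fin 4) (Fin N ⊕ Fin 4) ℤ,
      U.det = 1 ∧ V.det = -1 ∧
      (∀ i j : Fin N ⊕ Fin 4,
        ¬((∃ k, i = Sum.inr k) ∧ (∃ k, j = Sum.inr k)) →
          U i j = (1 : Matrix (Fin N ⊕ Fin 4) (Fin N ⊕ Fin 4) ℤ) i j) ∧
      (∀ i j : Fin N ⊕ Fin 4,
        ¬((∃ k, i = Sum.inr k) ∧ (∃ k, j = Sum.inr k)) →
          V i j = (1 : Matrix (Fin N ⊕ Fin 4) (Fin N ⊕ Fin 4) ℤ) i j) ∧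
      U * cuntzSpliceOnceExt B u * V = cuntzSpliceTwice B u := by

  classical
  set C : Matrix (Fin N) (Fin 4) ℤ := fun i k => if i = u ∧ k = 0 then 1 else 0 with hC
  set R : Matrix (Fin 4) (Fin N) ℤ := fun k j => if k = 0 ∧ j = u then 1 else 0 with hR
  have hM : cuntzSpliceOnceExt B u
      = fromBlocks B C R !![0,1,0,0; 1,0,0,0; 0,0,-1,0; 0,0,0,-1] := by
    ext i j; cases i <;> cases j <;> rfl
  have hM' : cuntzSpliceTwice B u
      = fromBlocks B C R !![0, 1, 1, 0; 1, 0, 0, 0; 1, 0, 0, 1; 0, 0, 1, 0] := by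
    ext i j; cases i <;> cases j <;> rfl
  refine ⟨fromBlocks 1 0 0 cuntzP, fromBlocks 1 0 0 cuntzQ, ?_, ?_, ?_, ?_, ?_⟩
  · rw [Matrix.det_fromBlocks_zero₂₁, Matrix.det_one, cuntzP_det, one_mul]
  · rw [Matrix.det_fromBlocks_zero₂₁, Matrix.det_one, cuntzQ_det, one_mul]
  · rintro i j h
    cases i <;> cases j <;>
      simp_all [Matrix.fromBlocks, Matrix.one_apply, Sum.inl.injEq]
  · rintro i j h
    cases i <;> cases j <;>
      simp_all [Matrix.fromBlocks, Matrix.one_apply, Sum.inl.injEq]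
  · have hCQ : C * cuntzQ = C := by
      ext i k
      simp only [Matrix.mul_apply]; simp only [hC]
      rw [Finset.sum_eq_single (0 : Fin 4)]
      · by_cases hi : i = u <;> simp [hi, cuntzQ_row]
      · intro b _ hb
        simp [hb]
      · simp
    have hPR : cuntzP * R = R := by
      ext k j
      simp only [Matrix.mul_apply]; simp only [hR]
      rw [Finset.sum_eq_single (0 : Fin 4)]
      · by_cases hj : j = u <;> simp [hj, cuntzP_col]
      · intro b _ hb
        simp [hb]
      · simp
    rw [hM, hM', Matrix.fromBlocks_multiply, Matrix.fromBlocks_multiply]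
    simp only [Matrix.one_mul, Matrix.mul_one, Matrix.zero_mul, Matrix.mul_zero,
      add_zero, zero_add, hCQ, hPR]
    rw [cuntzPAQ]
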